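/- Let 𝔞 be a nonzero fractional ideal of 𝓞_K, let x ∈ ℂ be nonzero, and let Λ = {τ(a)·x : a ∈ 𝔞}. Then the additive subgroup of ℝ generated by {Im(z·conj(w)) : z, w ∈ Λ} equals N(𝔞)·|x|²·α_R·ℤ, where N(𝔞) ∈ ℚ_{>0} is the absolute norm of the fractional ideal 𝔞. (Consequently, a hermitian form μ·z·conj(w) with μ ∈ ℝ_{>0} induces a principal polarization on ℂ/Λ exactly when μ = 1/(α_R·N(𝔞)·|x|²).) -/

import Mathlib

open NumberField

private lemma zmultiples_neg' (t : ℝ) :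
    AddSubgroup.zmultiples (-t) = AddSubgroup.zmultiples t := by
  ext r
  simp only [AddSubgroup.mem_zmultiples_iff]
  constructor <;> rintro ⟨k, rfl⟩ <;> exact ⟨-k, by simp⟩

private lemma im_bilin (u v : ℂ) (m₀ m₁ n₀ n₁ : ℤ) :
    ((m₀ • u + m₁ • v) * (starRingEnd ℂ) (n₀ • u + n₁ • v)).im
      = (m₀ * n₁ - m₁ * n₀ : ℤ) * (u * starRingEnd ℂ v).im := by
  simp only [zsmul_eq_mul, map_add, map_mul, map_intCast, Complex.add_im, Complex.add_re,
    Complex.mul_im, Complex.mul_re, Complex.conj_re, Complex.conj_im, Complex.intCast_re,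
    Complex.intCast_im]
  push_cast
  ring

/-- For `Λ = τ(𝔞)·x ⊆ ℂ` with `𝔞` a nonzero fractional ideal of `𝓞 K` and
`x ≠ 0`, the additive subgroup of `ℝ` generated by `{Im (z · conj w) : z, w ∈ Λ}` equals
`N(𝔞)·|x|²·α_R·ℤ`. -/
theorem stmt_8
    (K : Type*) [Field K] [NumberField K]
    (hdeg : Module.finrank ℚ K = 2)
    (hcplx : IsEmpty (K →+* ℝ))
    (τ : K →+* ℂ)
    (ω : 𝓞 K) (hω : Algebra.adjoin ℤ ({ω} : Set (𝓞 K)) = ⊤)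
    (αR : ℝ) (hα : αR = (τ (algebraMap (𝓞 K) K ω)).im) (hαpos : 0 < αR)
    (𝔞 : FractionalIdeal (nonZeroDivisors (𝓞 K)) K) (h𝔞 : 𝔞 ≠ 0)
    (x : ℂ) (hx : x ≠ 0)
    (Λ : Set ℂ) (hΛ : Λ = {z : ℂ | ∃ a ∈ 𝔞, z = τ a * x}) :
    AddSubgroup.closure {r : ℝ | ∃ z ∈ Λ, ∃ w ∈ Λ, r = (z * starRingEnd ℂ w).im} =
      AddSubgroup.zmultiples
        (((FractionalIdeal.absNorm 𝔞 : ℚ) : ℝ) * ‖x‖ ^ 2 * αR) := by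
  classical
  open Module in
  -- a power basis of `𝓞 K` generated by `ω`
  have hint : IsIntegral ℤ ω := IsIntegral.of_finite ℤ ω
  let pb : PowerBasis ℤ (𝓞 K) :=
    (Algebra.adjoin.powerBasis' hint).map
      ((Subalgebra.equivOfEq _ _ hω).trans Subalgebra.topEquiv)
  have hgen : pb.gen = ω := by
    simp [pb, PowerBasis.map_gen, Algebra.adjoin.powerBasis'_gen]
  have hrank : Module.finrank ℤ (𝓞 K) = 2 := by rw [RingOfIntegers.rank, hdeg]
  have hdim : pb.dim = 2 := by rw [← pb.finrank, hrank]
  let b : Basis (Fin 2) ℤ (𝓞 K) := pb.basis.reindex (finCongr hdim)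
  have hb0 : b 0 = 1 := by
    simp [b, Basis.reindex_apply, pb.basis_eq_pow]
  have hb1 : b 1 = ω := by
    have h10 : (finCongr hdim).symm 1 = ⟨1, by omega⟩ := rfl
    simp [b, Basis.reindex_apply, h10, pb.basis_eq_pow, hgen]
  -- a `ℤ`-basis of `𝔞`
  let u𝔞 : (FractionalIdeal (nonZeroDivisors (𝓞 K)) K)ˣ := Units.mk0 𝔞 h𝔞
  have hcard : Fintype.card (Module.Free.ChooseBasisIndex ℤ 𝔞) = 2 := by
    have h1 : Module.finrank ℤ 𝔞 = 2 := by
      have h2 := fractionalIdeal_rank K u𝔞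
      rw [hrank] at h2
      exact h2
    rw [← finrank_eq_card_chooseBasisIndex, h1]
  let eI : Module.Free.ChooseBasisIndex ℤ 𝔞 ≃ Fin 2 := Fintype.equivFinOfCardEq hcard
  let bI : Basis (Fin 2) ℤ 𝔞 := (fractionalIdealBasis K 𝔞).reindex eI
  -- the rational basis of `K` induced by `b`
  let b₀ : Basis (Fin 2) ℚ K := b.localizationLocalization ℚ (nonZeroDivisors ℤ) K
  have hb₀0 : b₀ 0 = 1 := by
    simp [b₀, Basis.localizationLocalization_apply, hb0]
  have hb₀1 : b₀ 1 = algebraMap (𝓞 K) K ω := by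
    simp [b₀, Basis.localizationLocalization_apply, hb1]
  have hτ : ∀ y : K, τ y = ((b₀.repr y 0 : ℚ) : ℂ)
      + ((b₀.repr y 1 : ℚ) : ℂ) * τ (algebraMap (𝓞 K) K ω) := by
    intro y
    conv_lhs => rw [← b₀.sum_repr y]
    rw [Fin.sum_univ_two, hb₀0, hb₀1, Rat.smul_def, Rat.smul_def, mul_one]
    rw [map_add, map_mul, map_ratCast, map_ratCast]
  -- notation
  set u : ℂ := τ (algebraMap (𝓞 K) K ω) with hu
  set e₁ : K := (bI 0 : K) with he₁
  set e₂ : K := (bI 1 : K) with he₂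
  set p : ℚ := b₀.repr e₁ 0 with hp
  set q : ℚ := b₀.repr e₁ 1 with hq
  set r : ℚ := b₀.repr e₂ 0 with hr
  set s : ℚ := b₀.repr e₂ 1 with hs
  -- the determinant identity
  have hdet := FractionalIdeal.abs_det_basis_change b 𝔞 bI
  have hdetv : b₀.det ((↑) ∘ bI) = p * s - r * q := by
    rw [Basis.det_apply, Matrix.det_fin_two]
    simp only [Basis.toMatrix_apply, Function.comp_apply]
    rfl
  rw [hdetv] at hdet
  -- the imaginary part of `τ e₁ * conj (τ e₂)`
  have him : (τ e₁ * starRingEnd ℂ (τ e₂)).im = ((q * r - p * s : ℚ) : ℝ) * αR := by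
    rw [hτ e₁, hτ e₂, hα, ← hp, ← hq, ← hr, ← hs]
    simp only [map_add, map_mul, map_ratCast, Complex.add_im, Complex.add_re, Complex.mul_im,
      Complex.mul_re, Complex.conj_re, Complex.conj_im, Complex.ratCast_im, Complex.ratCast_re]
    push_cast
    ring
  -- the generator of the lattice of imaginary parts
  set c : ℝ := ((τ e₁ * x) * starRingEnd ℂ (τ e₂ * x)).im with hc
  have hcval : c = ((q * r - p * s : ℚ) : ℝ) * αR * ‖x‖ ^ 2 := by
    have hxconj : x * starRingEnd ℂ x = ((‖x‖ ^ 2 : ℝ) : ℂ) := by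
      rw [Complex.sq_norm, Complex.mul_conj]
    have h4 : (τ e₁ * x) * starRingEnd ℂ (τ e₂ * x)
        = (τ e₁ * starRingEnd ℂ (τ e₂)) * ((‖x‖ ^ 2 : ℝ) : ℂ) := by
      rw [map_mul, ← hxconj]
      ring
    have h5 : ∀ (w : ℂ) (t : ℝ), (w * (t : ℂ)).im = w.im * t := fun w t => by
      simp [Complex.mul_im]
    rw [hc, h4, h5, him]
  -- membership of generators in `Λ`
  have hmemΛ : ∀ i : Fin 2, (bI i : K) ∈ 𝔞 := fun i =>
    FractionalIdeal.mem_coe.mp (bI i).2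
  -- Step 1 : the closure equals `zmultiples c`
  have hstep1 : AddSubgroup.closure
      {t : ℝ | ∃ z ∈ Λ, ∃ w ∈ Λ, t = (z * starRingEnd ℂ w).im} = AddSubgroup.zmultiples c := by
    apply le_antisymm
    · rw [AddSubgroup.closure_le]
      rintro t ⟨z, hz, w, hw, rfl⟩
      rw [hΛ] at hz hw
      obtain ⟨a, ha, rfl⟩ := hz
      obtain ⟨a', ha', rfl⟩ := hw
      -- decompose `a` and `a'` along `bI`
      have key : ∀ y : K, y ∈ 𝔞 → ∃ m₀ m₁ : ℤ,
          τ y * x = m₀ • (τ e₁ * x) + m₁ • (τ e₂ * x) := by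
        intro y hy
        set Y : 𝔞 := ⟨y, FractionalIdeal.mem_coe.mpr hy⟩ with hY
        refine ⟨bI.repr Y 0, bI.repr Y 1, ?_⟩
        have h1 : y = (bI.repr Y 0 : ℤ) • e₁ + (bI.repr Y 1 : ℤ) • e₂ := by
          have h2 := bI.sum_repr Y
          rw [Fin.sum_univ_two] at h2
          have h3 := congrArg (Subtype.val) h2
          simpa [he₁, he₂] using h3.symm
        rw [h1, map_add, map_zsmul, map_zsmul, zsmul_eq_mul, zsmul_eq_mul,
          zsmul_eq_mul, zsmul_eq_mul]
        ring
      obtain ⟨m₀, m₁, hm⟩ := key a ha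
      obtain ⟨n₀, n₁, hn⟩ := key a' ha'
      rw [hm, hn, im_bilin]
      exact ⟨m₀ * n₁ - m₁ * n₀, by push_cast [zsmul_eq_mul]; ring⟩
    · rw [AddSubgroup.zmultiples_le]
      apply AddSubgroup.subset_closure
      exact ⟨τ e₁ * x, by rw [hΛ]; exact ⟨e₁, hmemΛ 0, rfl⟩,
        τ e₂ * x, by rw [hΛ]; exact ⟨e₂, hmemΛ 1, rfl⟩, rfl⟩
  rw [hstep1]
  -- Step 2 : identify `c` up to sign with the claimed generator
  rcases abs_eq (FractionalIdeal.absNorm_nonneg 𝔞) |>.mp hdet with h | h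
  · have : c = -(((FractionalIdeal.absNorm 𝔞 : ℚ) : ℝ) * ‖x‖ ^ 2 * αR) := by
      rw [hcval]
      have h' : q * r - p * s = -(FractionalIdeal.absNorm 𝔞) := by linarith [h]
      rw [h']
      push_cast
      ring
    rw [this, zmultiples_neg']
  · have : c = ((FractionalIdeal.absNorm 𝔞 : ℚ) : ℝ) * ‖x‖ ^ 2 * αR := by
      rw [hcval]
      have h' : q * r - p * s = (FractionalIdeal.absNorm 𝔞) := by linarith [h]
      rw [h']
      push_cast
      ring
    rw [this]
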